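/- Let K be a field and A, a ∈ K with A ≠ 0, A² ≠ 1 and a ≠ 0, and set B = A⁻¹ (so A ≠ B). If the Kauffman–Vogel coefficient γ = (B²·a − A²·a⁻¹)/(A − B) + A·B vanishes, then a = A or a = −A³. (This is the paper's conclusion in the Comments section that, for a multiplicative planar polynomial with μ ≠ 1, the only possible parameter choices are a = A or a = −A³.) -/

import Mathlib

/-- Let `K` be a field and `A a : K` with `A ≠ 0`, `A² ≠ 1`, `a ≠ 0`, and set
`B = A⁻¹`. If the Kauffman–Vogel coefficient
`γ = (B²·a − A²·a⁻¹)/(A − B) + A·B` vanishes, then `a = A` or `a = −A³`. -/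
theorem kauffman_vogel_gamma_zero_cases
    (K : Type*) [Field K] (A B a : K) (hA : A ≠ 0) (hA2 : A ^ 2 ≠ 1)
    (ha : a ≠ 0) (hB : B = A⁻¹) (hAB : A ≠ B)
    (γ : K)
    (hγ : γ = (B ^ 2 * a - A ^ 2 * a⁻¹) / (A - B) + A * B)
    (hγ0 : γ = 0) :
    a = A ∨ a = -A ^ 3 := by
  subst hB hγ
  have h1 : A * A - 1 ≠ 0 := by
    intro h; apply hA2; rw [pow_two]; linear_combination h
  field_simp [h1] at hγ0
  have key : A * ((a - A) * (a + A ^ 3)) = 0 := by linear_combination A * hγ0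
  rcases mul_eq_zero.mp key with h | h
  · exact absurd h hA
  · rcases mul_eq_zero.mp h with h | h
    · exact Or.inl (sub_eq_zero.mp h)
    · exact Or.inr (eq_neg_of_add_eq_zero_left h)
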